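/- Consider two links with latencies ℓ₁(x) = x and ℓ₂(x) = 2x + 2, predicted rate r̄ = 1, optimal flow for r̄ being f̄₁* = 1, f̄₂* = 0. For any t ≥ 0, let r = 1 + t, define the optimal flow at rate r as f₁* = 1 + (2/3)t, f₂* = (1/3)t, with optimal cost (f₁*)² + 2(f₂*)² + 2f₂*. Then the ratio 2(1 + t)² / ((1 + (2/3)t)² + 2(1/9)t² + (2/3)t) ≥ 2 for all t ≥ 0, with equality at t = 0. -/
import Mathlib


/-- Algebraic core of the 2-robustness lower bound: with links ℓ₁(x)=x, ℓ₂(x)=2x+2 and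
r = 1 + t, the ratio of modified Nash cost 2(1+t)² to the optimal cost
(1 + (2/3)t)² + 2(t/3)² + (2/3)t is at least 2 for all t ≥ 0, with equality at t = 0. -/
theorem stmt12 :
    (∀ t : ℝ, 0 ≤ t →
      2 ≤ 2 * (1 + t) ^ 2 /
        ((1 + (2 / 3) * t) ^ 2 + 2 * (1 / 9) * t ^ 2 + (2 / 3) * t)) ∧
    2 * (1 + (0 : ℝ)) ^ 2 /
        ((1 + (2 / 3) * 0) ^ 2 + 2 * (1 / 9) * 0 ^ 2 + (2 / 3) * 0) = 2 := by
  constructor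
  · intro t ht
    have hd : (0:ℝ) < (1 + (2 / 3) * t) ^ 2 + 2 * (1 / 9) * t ^ 2 + (2 / 3) * t := by
      nlinarith
    rw [ge_iff_le.symm, ge_iff_le, le_div_iff₀ hd]
    nlinarith
  · norm_num
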